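/- arXiv:2304.13258 — 10 statements merged into one kernel-verified Lean document; each statement's English description precedes it below -/
import Mathlib

section
/- Let ℓ ≤ n be positive integers. Let 𝕊 ⊆ 𝔹 be a set of states, and let 𝒮 ⊆ 𝕊 support a spherical 2-design. Let M ∈ ℝ^{n×ℓ} satisfy Mᵀ u_n = u_ℓ and have rank ℓ (equivalently, P M = I_ℓ for a Moore–Penrose pseudoinverse P of M), and set 𝒫 := M𝒮 (the image of 𝒮 under v ↦ Mv). Then M ∈ ddi_𝕊(𝒫); that is, M ∈ ℳ_𝕊(𝒫) and det(MᵀM) ≤ det(NᵀN) for every N ∈ ℳ_𝕊(𝒫). -/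
open Matrix

section Helpers
variable {m m' : ℕ}

lemma my_vecMulVec_conj (A : Matrix (Fin m') (Fin m) ℝ) (B : Matrix (Fin m') (Fin m) ℝ)
    (x y : Fin m → ℝ) :
    A * vecMulVec x y * Bᵀ = vecMulVec (A *ᵥ x) (B *ᵥ y) := by
  ext i j
  simp only [mul_apply, vecMulVec_apply, transpose_apply, mulVec, dotProduct, Finset.sum_mul,
    Finset.mul_sum]
  exact Finset.sum_congr rfl fun a _ => Finset.sum_congr rfl fun b _ => by ring

lemma my_trace_vecMulVec (x y : Fin m → ℝ) : (vecMulVec x y).trace = x ⬝ᵥ y := by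
  simp [trace, vecMulVec_apply, Matrix.diag, dotProduct]

lemma my_vecMulVec_mulVec (w v x : Fin m → ℝ) : vecMulVec w v *ᵥ x = (v ⬝ᵥ x) • w := by
  ext i
  simp only [mulVec, dotProduct, vecMulVec_apply, Pi.smul_apply, smul_eq_mul, Finset.sum_mul]
  exact Finset.sum_congr rfl fun j _ => by ring

lemma my_psd_det_nonneg {A : Matrix (Fin m) (Fin m) ℝ} (hA : A.PosSemidef) : 0 ≤ A.det := by
  rw [hA.1.det_eq_prod_eigenvalues]
  exact Finset.prod_nonneg fun i _ => by simpa using hA.eigenvalues_nonneg i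

lemma my_trace_eq_sum_eigenvalues {A : Matrix (Fin m) (Fin m) ℝ} (hA : A.IsHermitian) :
    A.trace = ∑ i, hA.eigenvalues i := by
  conv_lhs => rw [hA.spectral_theorem]
  rw [Unitary.conjStarAlgAut_apply, Matrix.trace_mul_comm, ← Matrix.mul_assoc]
  rw [(Matrix.mem_unitaryGroup_iff').mp (hA.eigenvectorUnitary).2]
  simp [Matrix.trace_diagonal]

lemma my_one_le_det_one_add {D : Matrix (Fin m) (Fin m) ℝ} (hD : D.PosSemidef) :
    1 ≤ (1 + D).det := by
  set U : Matrix (Fin m) (Fin m) ℝ := (hD.1.eigenvectorUnitary : Matrix (Fin m) (Fin m) ℝ)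
  have hU : U * star U = 1 := (Matrix.mem_unitaryGroup_iff).mp (hD.1.eigenvectorUnitary).2
  have h1 : (1 + D) = U * (1 + diagonal (RCLike.ofReal ∘ hD.1.eigenvalues)) * (star U) := by
    rw [Matrix.mul_add, Matrix.add_mul, Matrix.mul_one, hU]
    conv_lhs => rw [hD.1.spectral_theorem]
    rfl
  have h2 : ((1:Matrix (Fin m) (Fin m) ℝ) + D).det =
      ((1 + diagonal (RCLike.ofReal ∘ hD.1.eigenvalues) : Matrix (Fin m) (Fin m) ℝ)).det *
        (U * star U).det := by
    rw [h1, Matrix.det_mul, Matrix.det_mul, Matrix.det_mul]; ring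
  rw [h2, hU, Matrix.det_one, mul_one, ← Matrix.diagonal_one, Matrix.diagonal_add,
    Matrix.det_diagonal]
  calc (1:ℝ) = ∏ _i : Fin m, 1 := by simp
  _ ≤ _ := Finset.prod_le_prod (by intro i _; norm_num)
      (by intro i _; simpa using hD.eigenvalues_nonneg i)

lemma my_amgm (hm : 0 < m) (x : Fin m → ℝ) (hx : ∀ i, 0 ≤ x i) (hsum : ∑ i, x i ≤ 1) :
    ∏ i, x i ≤ ((m:ℝ)⁻¹)^m := by
  have hm' : (0:ℝ) < m := by exact_mod_cast hm
  have key := Real.geom_mean_le_arith_mean_weighted Finset.univ (fun _ => (m:ℝ)⁻¹) x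
    (fun i _ => by positivity) (by simp [Finset.card_univ]; field_simp) (fun i _ => hx i)
  have hprod : ∏ i, x i ^ ((m:ℝ)⁻¹) = (∏ i, x i) ^ ((m:ℝ)⁻¹) := by
    rw [← Real.finset_prod_rpow _ _ (fun i _ => hx i)]
  have hsum2 : ∑ i, (m:ℝ)⁻¹ * x i ≤ (m:ℝ)⁻¹ := by
    rw [← Finset.mul_sum]
    calc (m:ℝ)⁻¹ * ∑ i, x i ≤ (m:ℝ)⁻¹ * 1 := by
          exact mul_le_mul_of_nonneg_left hsum (by positivity)
    _ = (m:ℝ)⁻¹ := mul_one _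
  have h3 : (∏ i, x i) ^ ((m:ℝ)⁻¹) ≤ (m:ℝ)⁻¹ := by
    rw [← hprod]; exact key.trans hsum2
  have h4 : ((∏ i, x i) ^ ((m:ℝ)⁻¹))^m ≤ ((m:ℝ)⁻¹)^m :=
    pow_le_pow_left₀ (Real.rpow_nonneg (Finset.prod_nonneg fun i _ => hx i) _) h3 m
  have h5 : ((∏ i, x i) ^ ((m:ℝ)⁻¹))^m = ∏ i, x i := by
    rw [← Real.rpow_natCast ((∏ i, x i) ^ ((m:ℝ)⁻¹)) m,
      ← Real.rpow_mul (Finset.prod_nonneg fun i _ => hx i)]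
    rw [inv_mul_cancel₀ (by exact_mod_cast hm.ne')]
    exact Real.rpow_one _
  rwa [h5] at h4

open scoped MatrixOrder in
lemma my_det_le_det_add {A B : Matrix (Fin m) (Fin m) ℝ}
    (hA : A.PosSemidef) (hB : B.PosSemidef) : A.det ≤ (A + B).det := by
  by_cases hu : IsUnit A.det
  case neg =>
    have : A.det = 0 := by
      by_contra h; exact hu (isUnit_iff_ne_zero.mpr h)
    rw [this]
    exact my_psd_det_nonneg (hA.add hB)
  case pos =>
    set S := CFC.sqrt A with hSdef
    have hSsq : S * S = A := by rw [← pow_two]; exact CFC.sq_sqrt A hA.nonneg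
    have hSd : IsUnit S.det := by
      have : S.det * S.det = A.det := by rw [← Matrix.det_mul, hSsq]
      rcases hu with ⟨u, hu⟩
      refine isUnit_iff_ne_zero.mpr fun h => ?_
      rw [h, mul_zero] at this
      rw [← hu] at this
      exact u.ne_zero this.symm
    have hS1 : S * S⁻¹ = 1 := Matrix.mul_nonsing_inv _ hSd
    have hS2 : S⁻¹ * S = 1 := Matrix.nonsing_inv_mul _ hSd
    have hSH : Sᴴ = S := (CFC.sqrt_nonneg A).posSemidef.1
    set D := S⁻¹ * B * S⁻¹ with hDdef
    have hD : D.PosSemidef := by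
      have := hB.mul_mul_conjTranspose_same S⁻¹
      rwa [Matrix.conjTranspose_nonsing_inv, hSH] at this
    have key : A + B = S * (1 + D) * S := by
      rw [Matrix.mul_add, Matrix.mul_one, Matrix.add_mul, hSsq, hDdef]
      congr 1
      symm
      calc S * (S⁻¹ * B * S⁻¹) * S = S * S⁻¹ * B * (S⁻¹ * S) := by
            simp only [Matrix.mul_assoc]
      _ = B := by rw [hS1, hS2, one_mul, mul_one]
    have hdetA : 0 ≤ A.det := my_psd_det_nonneg hA
    calc A.det = A.det * 1 := (mul_one _).symm
    _ ≤ A.det * (1 + D).det := mul_le_mul_of_nonneg_left (my_one_le_det_one_add hD) hdetA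
    _ = (A + B).det := by
        rw [key, Matrix.det_mul, Matrix.det_mul, ← hSsq, Matrix.det_mul]; ring

end Helpers

lemma my_sum_mulVec {k : ℕ} (f : Fin k → Matrix (Fin m) (Fin m') ℝ) (x : Fin m' → ℝ) :
    (∑ i, f i) *ᵥ x = ∑ i, f i *ᵥ x := by
  ext j
  simp only [mulVec, dotProduct, Finset.sum_apply, Finset.sum_mul, Matrix.sum_apply]
  rw [Finset.sum_comm]



/-- The ball `𝔹` of states: vectors on the hyperplane `uₗ ⬝ v = 1` with norm at most one. -/
def stateBall (ℓ : ℕ) : Set (Fin ℓ → ℝ) :=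
  {v | (1 : Fin ℓ → ℝ) ⬝ᵥ v = 1 ∧ v ⬝ᵥ v ≤ 1}

/-- The set `ℳ_𝕊(𝒬)` of quasi-measurements from `𝕊` consistent with `𝒬`. -/
def consistentSet {ℓ n : ℕ} (𝕊 : Set (Fin ℓ → ℝ)) (𝒬 : Set (Fin n → ℝ)) :
    Set (Matrix (Fin n) (Fin ℓ) ℝ) :=
  {M | Mᵀ *ᵥ (1 : Fin n → ℝ) = (1 : Fin ℓ → ℝ) ∧ 𝒬 ⊆ (fun v => M *ᵥ v) '' 𝕊}

/-- The data-driven inference set: consistent quasi-measurements with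
minimum-volume probability range, i.e. minimizing `det (MᵀM)`. -/
def ddi {ℓ n : ℕ} (𝕊 : Set (Fin ℓ → ℝ)) (𝒬 : Set (Fin n → ℝ)) :
    Set (Matrix (Fin n) (Fin ℓ) ℝ) :=
  {M ∈ consistentSet 𝕊 𝒬 | ∀ N ∈ consistentSet 𝕊 𝒬, (Mᵀ * M).det ≤ (Nᵀ * N).det}

/-- If `𝕊 ⊆ 𝔹`, `𝒮 ⊆ 𝕊` supports a spherical 2-design, and the
quasi-measurement `M` (informationally complete, i.e. `P M = I` for a Moore–Penrose
pseudoinverse `P`) satisfies `Mᵀ uₙ = uₗ`, then `M` belongs to the output of the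
data-driven inference map on `𝒬 := M 𝒮`. -/
theorem stmt0 (ℓ n : ℕ) (hℓ : 0 < ℓ) (hn : ℓ ≤ n)
    (𝕊 : Set (Fin ℓ → ℝ)) (h𝕊 : 𝕊 ⊆ stateBall ℓ)
    (𝒮 : Set (Fin ℓ → ℝ)) (h𝒮 : 𝒮 ⊆ 𝕊)
    (k : ℕ) (s : Fin k → (Fin ℓ → ℝ)) (p : Fin k → ℝ)
    (hs : ∀ i, s i ∈ 𝒮)
    (hpure : ∀ i, (1 : Fin ℓ → ℝ) ⬝ᵥ s i = 1 ∧ s i ⬝ᵥ s i = 1)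
    (hp : ∀ i, 0 ≤ p i) (hpsum : ∑ i, p i = 1)
    (hdesign : ∑ i, p i • vecMulVec (s i) (s i) = (ℓ : ℝ)⁻¹ • (1 : Matrix (Fin ℓ) (Fin ℓ) ℝ))
    (M : Matrix (Fin n) (Fin ℓ) ℝ) (P : Matrix (Fin ℓ) (Fin n) ℝ)
    (hMP1 : M * P * M = M) (hMP2 : P * M * P = P)
    (hMP3 : (M * P)ᵀ = M * P) (hMP4 : (P * M)ᵀ = P * M)
    (hPM : P * M = 1)
    (hMu : Mᵀ *ᵥ (1 : Fin n → ℝ) = (1 : Fin ℓ → ℝ))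
    (𝒬 : Set (Fin n → ℝ)) (h𝒬 : 𝒬 = (fun v => M *ᵥ v) '' 𝒮) :
    M ∈ ddi 𝕊 𝒬 := by
  refine ⟨⟨hMu, ?_⟩, ?_⟩
  · rw [h𝒬]; exact Set.image_mono h𝒮
  intro N hN
  obtain ⟨hNu, hNsub⟩ := hN
  have hQ : ∀ i, M *ᵥ s i ∈ 𝒬 := fun i => h𝒬 ▸ Set.mem_image_of_mem _ (hs i)
  choose v hv1 hv2 using fun i => hNsub (hQ i)
  have hv2' : ∀ i, N *ᵥ v i = M *ᵥ s i := fun i => hv2 i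
  set R := P * N with hR
  have hRv : ∀ i, R *ᵥ v i = s i := by
    intro i
    rw [hR, ← Matrix.mulVec_mulVec, hv2' i, Matrix.mulVec_mulVec, hPM, Matrix.one_mulVec]
  set T := ∑ i, p i • vecMulVec (v i) (v i) with hT
  have hRT : R * T * Rᵀ = (ℓ:ℝ)⁻¹ • (1 : Matrix (Fin ℓ) (Fin ℓ) ℝ) := by
    rw [hT, Finset.mul_sum, Finset.sum_mul, ← hdesign]
    refine Finset.sum_congr rfl fun i _ => ?_
    rw [Matrix.mul_smul, Matrix.smul_mul, my_vecMulVec_conj, hRv i]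
  have hTpsd : T.PosSemidef := by
    rw [Matrix.posSemidef_iff_dotProduct_mulVec]
    constructor
    · show Tᴴ = T
      rw [hT]
      ext i j
      simp [Matrix.conjTranspose_apply, Matrix.sum_apply, vecMulVec_apply, mul_comm]
    · intro x
      have hTx : T *ᵥ x = ∑ i, (p i • vecMulVec (v i) (v i)) *ᵥ x := by
        rw [hT, my_sum_mulVec]
      rw [hTx]
      have : ∀ i, (p i • vecMulVec (v i) (v i)) *ᵥ x = (p i * (v i ⬝ᵥ x)) • v i := by
        intro i
        rw [Matrix.smul_mulVec, my_vecMulVec_mulVec, smul_smul]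
      simp only [this]
      have hdp : star x ⬝ᵥ (∑ i, (p i * (v i ⬝ᵥ x)) • v i)
          = ∑ i, (p i * (v i ⬝ᵥ x)) * (x ⬝ᵥ v i) := by
        simp only [dotProduct, Finset.sum_apply, Pi.smul_apply, smul_eq_mul, Finset.mul_sum,
          Finset.sum_mul, star_trivial]
        rw [Finset.sum_comm]
        exact Finset.sum_congr rfl fun i _ => Finset.sum_congr rfl fun j _ =>
          Finset.sum_congr rfl fun a _ => by ring
      rw [hdp]
      refine Finset.sum_nonneg fun i _ => ?_
      rw [dotProduct_comm x (v i)]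
      nlinarith [hp i, mul_self_nonneg (v i ⬝ᵥ x)]
  have hTr : T.trace ≤ 1 := by
    rw [hT, Matrix.trace_sum]
    simp only [Matrix.trace_smul, my_trace_vecMulVec, smul_eq_mul]
    calc ∑ i, p i * (v i ⬝ᵥ v i) ≤ ∑ i, p i * 1 :=
          Finset.sum_le_sum fun i _ => mul_le_mul_of_nonneg_left (h𝕊 (hv1 i)).2 (hp i)
    _ = 1 := by simpa using hpsum
  have hdetT : T.det ≤ ((ℓ:ℝ)⁻¹)^ℓ := by
    have h := my_amgm hℓ hTpsd.1.eigenvalues hTpsd.eigenvalues_nonneg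
      (by rw [← my_trace_eq_sum_eigenvalues hTpsd.1]; exact hTr)
    rw [hTpsd.1.det_eq_prod_eigenvalues]
    simpa using h
  have hdet1 : R.det^2 * T.det = ((ℓ:ℝ)⁻¹)^ℓ := by
    have h := congrArg Matrix.det hRT
    rw [Matrix.det_mul, Matrix.det_mul, Matrix.det_transpose, Matrix.det_smul, Matrix.det_one,
      mul_one, Fintype.card_fin] at h
    linear_combination h
  have hTdetpos : 0 < T.det := by
    rcases lt_or_ge 0 T.det with h | h
    · exact h
    exfalso
    have h1 : R.det^2 * T.det ≤ 0 := mul_nonpos_of_nonneg_of_nonpos (sq_nonneg _) h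
    have h2 : (0:ℝ) < ((ℓ:ℝ)⁻¹)^ℓ := by positivity
    rw [hdet1] at h1; linarith
  have hR1 : 1 ≤ R.det^2 := by
    have h : T.det ≤ R.det^2 * T.det := by rw [hdet1]; exact hdetT
    exact (le_mul_iff_one_le_left hTdetpos).mp h
  have hMPidem : (M * P) * (M * P) = M * P := by
    calc M * P * (M * P) = (M * P * M) * P := by simp only [Matrix.mul_assoc]
    _ = M * P := by rw [hMP1]
  have hMM : (Mᵀ * M).PosSemidef := by
    have h := Matrix.posSemidef_conjTranspose_mul_self M
    rwa [Matrix.conjTranspose_eq_transpose_of_trivial] at h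
  have hkey1 : (Mᵀ * M).det ≤ R.det^2 * (Mᵀ * M).det :=
    le_mul_of_one_le_left (my_psd_det_nonneg hMM) hR1
  have hkey2 : R.det^2 * (Mᵀ * M).det = (Nᵀ * (M * P) * N).det := by
    have e1 : Nᵀ * (M * P) * N = Rᵀ * (Mᵀ * M) * R := by
      rw [hR, Matrix.transpose_mul]
      have e2 : Nᵀ * Pᵀ * (Mᵀ * M) * (P * N) = Nᵀ * ((Pᵀ * Mᵀ) * (M * P)) * N := by
        simp only [Matrix.mul_assoc]
      rw [e2, ← Matrix.transpose_mul, hMP3, hMPidem]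
    rw [e1, Matrix.det_mul, Matrix.det_mul, Matrix.det_transpose]; ring
  have hsplit : Nᵀ * N = Nᵀ * (M * P) * N + Nᵀ * (1 - M * P) * N := by
    rw [Matrix.mul_sub, Matrix.mul_one, Matrix.sub_mul]
    abel
  have hpsd1 : (Nᵀ * (M * P) * N).PosSemidef := by
    have h := Matrix.posSemidef_conjTranspose_mul_self ((M * P) * N)
    rw [Matrix.conjTranspose_eq_transpose_of_trivial, Matrix.transpose_mul] at h
    have e : Nᵀ * (M * P)ᵀ * ((M * P) * N) = Nᵀ * (M * P) * N := by
      rw [hMP3]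
      calc Nᵀ * (M * P) * ((M * P) * N) = Nᵀ * ((M * P) * (M * P)) * N := by
            simp only [Matrix.mul_assoc]
      _ = Nᵀ * (M * P) * N := by rw [hMPidem]
    rwa [e] at h
  have hQidem : (1 - M * P) * (1 - M * P) = 1 - M * P := by
    rw [Matrix.sub_mul, Matrix.one_mul, Matrix.mul_sub, Matrix.mul_one, hMPidem]
    abel
  have hQT : (1 - M * P)ᵀ = 1 - M * P := by
    rw [Matrix.transpose_sub, Matrix.transpose_one, hMP3]
  have hpsd2 : (Nᵀ * (1 - M * P) * N).PosSemidef := by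
    have h := Matrix.posSemidef_conjTranspose_mul_self ((1 - M * P) * N)
    rw [Matrix.conjTranspose_eq_transpose_of_trivial, Matrix.transpose_mul] at h
    have e : Nᵀ * (1 - M * P)ᵀ * ((1 - M * P) * N) = Nᵀ * (1 - M * P) * N := by
      rw [hQT]
      calc Nᵀ * (1 - M * P) * ((1 - M * P) * N)
          = Nᵀ * ((1 - M * P) * (1 - M * P)) * N := by simp only [Matrix.mul_assoc]
      _ = Nᵀ * (1 - M * P) * N := by rw [hQidem]
    rwa [e] at h
  calc (Mᵀ * M).det ≤ R.det^2 * (Mᵀ * M).det := hkey1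
  _ = (Nᵀ * (M * P) * N).det := hkey2
  _ ≤ (Nᵀ * N).det := by rw [hsplit]; exact my_det_le_det_add hpsd1 hpsd2
end

section
/- Let s_1, …, s_k ∈ ℝ^ℓ be pure states and p_1, …, p_k ≥ 0 weights with ∑_i p_i = 1 and ∑_i p_i s_i s_iᵀ = (1/ℓ)·I_ℓ. Let M ∈ ℝ^{ℓ×ℓ} be invertible with Mᵀ u_ℓ = u_ℓ, and suppose ‖M⁻¹ s_i‖² ≤ (u_ℓ·(M⁻¹ s_i))² for every i. Then det(MᵀM) ≥ 1. -/
open Matrix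

private lemma aux_conj {ℓ : ℕ} (N : Matrix (Fin ℓ) (Fin ℓ) ℝ) (x y : Fin ℓ → ℝ) :
    N * vecMulVec x y * Nᵀ = vecMulVec (N *ᵥ x) (N *ᵥ y) := by
  ext a b
  simp [mul_apply, vecMulVec_apply, mulVec, dotProduct, Finset.sum_mul, Finset.mul_sum]
  apply Finset.sum_congr rfl; intro c _
  apply Finset.sum_congr rfl; intro d _
  ring

private lemma aux_trace_vmv {ℓ : ℕ} (x y : Fin ℓ → ℝ) :
    (vecMulVec x y).trace = x ⬝ᵥ y := by
  simp [trace, vecMulVec_apply, dotProduct, diag]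

private lemma aux_trace_eig {n : Type*} [Fintype n] [DecidableEq n] {A : Matrix n n ℝ}
    (hA : A.IsHermitian) : A.trace = ∑ i, hA.eigenvalues i := by
  conv_lhs => rw [hA.spectral_theorem]
  rw [Unitary.conjStarAlgAut_apply, Matrix.trace_mul_cycle]
  rw [show (star (hA.eigenvectorUnitary : Matrix n n ℝ)) * (hA.eigenvectorUnitary : Matrix n n ℝ)
      = 1 from Unitary.coe_star_mul_self _]
  simp [trace_diagonal]

private lemma aux_posdef {n : Type*} [Fintype n] [DecidableEq n] (M : Matrix n n ℝ)
    (hM : IsUnit M.det) : (Mᵀ * M).PosDef := by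
  refine posDef_iff_dotProduct_mulVec.mpr ⟨(posSemidef_conjTranspose_mul_self M).1, fun x hx => ?_⟩
  have h1 : M *ᵥ x ≠ 0 := by
    intro h
    apply hx
    have := congrArg (fun v => M⁻¹ *ᵥ v) h
    simpa [mulVec_mulVec, nonsing_inv_mul M hM] using this
  have h2 : x ⬝ᵥ ((Mᵀ * M) *ᵥ x) = (M *ᵥ x) ⬝ᵥ (M *ᵥ x) := by
    rw [← mulVec_mulVec, dotProduct_mulVec, ← mulVec_transpose, transpose_transpose]
  simp only [star_trivial, h2]
  have := dotProduct_self_star_pos_iff.2 h1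
  simpa [star_trivial] using this

/-- Let `s 1, …, s k` be pure states (on the hyperplane `uₗ ⬝ v = 1`,
with unit norm) and `p` nonnegative weights summing to one that form a spherical
2-design, i.e. `∑ i, p i • sᵢ sᵢᵀ = (1/ℓ) I`.  If `M` is invertible with
`Mᵀ uₗ = uₗ` and `‖M⁻¹ sᵢ‖² ≤ (uₗ ⬝ (M⁻¹ sᵢ))²` for every `i`,
then `det (Mᵀ M) ≥ 1`. -/
theorem stmt2 (ℓ : ℕ) (hℓ : 0 < ℓ) (k : ℕ)
    (s : Fin k → (Fin ℓ → ℝ)) (p : Fin k → ℝ)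
    (hpure : ∀ i, (1 : Fin ℓ → ℝ) ⬝ᵥ s i = 1 ∧ s i ⬝ᵥ s i = 1)
    (hp : ∀ i, 0 ≤ p i) (hpsum : ∑ i, p i = 1)
    (hdesign : ∑ i, p i • vecMulVec (s i) (s i) = (ℓ : ℝ)⁻¹ • (1 : Matrix (Fin ℓ) (Fin ℓ) ℝ))
    (M : Matrix (Fin ℓ) (Fin ℓ) ℝ) (hM : IsUnit M.det)
    (hMu : Mᵀ *ᵥ (1 : Fin ℓ → ℝ) = 1)
    (hin : ∀ i, (M⁻¹ *ᵥ s i) ⬝ᵥ (M⁻¹ *ᵥ s i) ≤ ((1 : Fin ℓ → ℝ) ⬝ᵥ (M⁻¹ *ᵥ s i)) ^ 2) :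
    1 ≤ (Mᵀ * M).det := by
  have hMT : IsUnit Mᵀ.det := by simpa [det_transpose] using hM
  -- (Mᵀ)⁻¹ fixes the all-ones vector
  have hNu : (Mᵀ)⁻¹ *ᵥ (1 : Fin ℓ → ℝ) = 1 := by
    have := congrArg (fun v => (Mᵀ)⁻¹ *ᵥ v) hMu
    simpa [mulVec_mulVec, nonsing_inv_mul _ hMT] using this.symm
  -- u ⬝ (M⁻¹ sᵢ) = 1
  have hut : ∀ i, (1 : Fin ℓ → ℝ) ⬝ᵥ (M⁻¹ *ᵥ s i) = 1 := by
    intro i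
    rw [dotProduct_mulVec, ← mulVec_transpose, transpose_nonsing_inv, hNu]
    exact (hpure i).1
  have htle : ∀ i, (M⁻¹ *ᵥ s i) ⬝ᵥ (M⁻¹ *ᵥ s i) ≤ 1 := by
    intro i
    have := hin i
    rwa [hut i, one_pow] at this
  set B := Mᵀ * M with hBdef
  have hB : B.PosDef := aux_posdef M hM
  have hA : B⁻¹.PosDef := hB.inv
  have hAeq : B⁻¹ = M⁻¹ * (M⁻¹)ᵀ := by
    rw [hBdef, Matrix.mul_inv_rev, transpose_nonsing_inv]
  -- key identity
  have key : (ℓ : ℝ)⁻¹ • B⁻¹ = ∑ i, p i • vecMulVec (M⁻¹ *ᵥ s i) (M⁻¹ *ᵥ s i) := by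
    have : M⁻¹ * ((ℓ : ℝ)⁻¹ • (1 : Matrix (Fin ℓ) (Fin ℓ) ℝ)) * (M⁻¹)ᵀ
        = (ℓ : ℝ)⁻¹ • B⁻¹ := by
      rw [hAeq]
      simp [Matrix.mul_smul, Matrix.smul_mul]
    rw [← this, ← hdesign, Matrix.mul_sum, Matrix.sum_mul]
    refine Finset.sum_congr rfl fun i _ => ?_
    rw [Matrix.mul_smul, Matrix.smul_mul, aux_conj]
  -- trace bound
  have htrace : (ℓ : ℝ)⁻¹ * (B⁻¹).trace ≤ 1 := by
    have h1 : ((ℓ : ℝ)⁻¹ • B⁻¹).trace = (ℓ : ℝ)⁻¹ * (B⁻¹).trace := by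
      simp [trace_smul, smul_eq_mul]
    have h2 : (∑ i, p i • vecMulVec (M⁻¹ *ᵥ s i) (M⁻¹ *ᵥ s i)).trace
        = ∑ i, p i * ((M⁻¹ *ᵥ s i) ⬝ᵥ (M⁻¹ *ᵥ s i)) := by
      rw [trace_sum]
      exact Finset.sum_congr rfl fun i _ => by rw [trace_smul, aux_trace_vmv, smul_eq_mul]
    calc (ℓ : ℝ)⁻¹ * (B⁻¹).trace = (∑ i, p i • vecMulVec (M⁻¹ *ᵥ s i) (M⁻¹ *ᵥ s i)).trace := by
          rw [← h1, key]
      _ = ∑ i, p i * ((M⁻¹ *ᵥ s i) ⬝ᵥ (M⁻¹ *ᵥ s i)) := h2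
      _ ≤ ∑ i, p i * 1 := Finset.sum_le_sum fun i _ =>
          mul_le_mul_of_nonneg_left (htle i) (hp i)
      _ = 1 := by simp [hpsum]
  -- eigenvalues of B⁻¹
  set lam := hA.1.eigenvalues with hlam
  have hlampos : ∀ i, 0 < lam i := fun i => hA.eigenvalues_pos i
  have hsum : ∑ i, lam i = (B⁻¹).trace := (aux_trace_eig hA.1).symm
  -- AM-GM
  have hw : ∑ _i : Fin ℓ, (ℓ : ℝ)⁻¹ = 1 := by
    rw [Finset.sum_const]
    simp
    field_simp
  have hgm : ∏ i, lam i ^ ((ℓ : ℝ)⁻¹) ≤ ∑ i, (ℓ : ℝ)⁻¹ * lam i :=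
    Real.geom_mean_le_arith_mean_weighted Finset.univ (fun _ => (ℓ : ℝ)⁻¹) lam
      (fun i _ => by positivity) hw (fun i _ => (hlampos i).le)
  have hgm1 : ∏ i, lam i ^ ((ℓ : ℝ)⁻¹) ≤ 1 := by
    refine hgm.trans ?_
    rw [← Finset.mul_sum, hsum]
    exact htrace
  have hdetA : (B⁻¹).det ≤ 1 := by
    have hpow : (∏ i, lam i ^ ((ℓ : ℝ)⁻¹)) ^ ℓ ≤ 1 := by
      calc (∏ i, lam i ^ ((ℓ : ℝ)⁻¹)) ^ ℓ ≤ 1 ^ ℓ :=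
            pow_le_pow_left₀ (Finset.prod_nonneg fun i _ => Real.rpow_nonneg (hlampos i).le _) hgm1 ℓ
        _ = 1 := one_pow ℓ
    have heq : (∏ i, lam i ^ ((ℓ : ℝ)⁻¹)) ^ ℓ = ∏ i, lam i := by
      rw [← Finset.prod_pow]
      exact Finset.prod_congr rfl fun i _ =>
        Real.rpow_inv_natCast_pow (hlampos i).le hℓ.ne'
    have hdet : (B⁻¹).det = ∏ i, lam i := by
      rw [hA.1.det_eq_prod_eigenvalues]
      norm_num
      rfl
    rw [hdet, ← heq]
    exact hpow
  -- conclude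
  have hBdet : 0 < B.det := hB.det_pos
  have hAdet : 0 < (B⁻¹).det := hA.det_pos
  have hmul : B.det * (B⁻¹).det = 1 := by
    rw [← det_mul, mul_nonsing_inv _ hBdet.ne'.isUnit, det_one]
  nlinarith [hBdet, hAdet, hdetA, hmul]
end

section
/- Let s_1, …, s_k ∈ ℝ^ℓ be pure states and p_1, …, p_k ≥ 0 weights with ∑_i p_i = 1 and ∑_i p_i s_i s_iᵀ = (1/ℓ)·I_ℓ. Let M ∈ ℝ^{ℓ×ℓ} be invertible with Mᵀ u_ℓ = u_ℓ, and suppose ‖M⁻¹ s_i‖² ≤ (u_ℓ·(M⁻¹ s_i))² for every i. Then Tr(M⁻¹ M⁻ᵀ) ≤ ℓ, i.e., Tr((MᵀM)⁻¹) ≤ ℓ. -/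
open Matrix

lemma aux_conj_s3 {n : ℕ} (A : Matrix (Fin n) (Fin n) ℝ) (a b : Fin n → ℝ) :
    A * vecMulVec a b * Aᵀ = vecMulVec (A *ᵥ a) (A *ᵥ b) := by
  rw [vecMulVec_eq Unit, vecMulVec_eq Unit, replicateCol_mulVec, ← vecMul_transpose,
    replicateRow_vecMul]
  simp only [← Matrix.mul_assoc]

lemma aux_trace {n : ℕ} (a b : Fin n → ℝ) : (vecMulVec a b).trace = a ⬝ᵥ b := by
  simp [Matrix.trace, vecMulVec_apply, dotProduct, Matrix.diag]

/-- Let `s 1, …, s k` be pure states (on the hyperplane `uₗ ⬝ v = 1`,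
with unit norm) and `p` nonnegative weights summing to one that form a spherical
2-design, i.e. `∑ i, p i • sᵢ sᵢᵀ = (1/ℓ) I`.  If `M` is invertible with
`Mᵀ uₗ = uₗ` and `‖M⁻¹ sᵢ‖² ≤ (uₗ ⬝ (M⁻¹ sᵢ))²` for every `i`,
then `Tr (M⁻¹ M⁻ᵀ) ≤ ℓ`. -/
theorem stmt3 (ℓ : ℕ) (hℓ : 0 < ℓ) (k : ℕ)
    (s : Fin k → (Fin ℓ → ℝ)) (p : Fin k → ℝ)
    (hpure : ∀ i, (1 : Fin ℓ → ℝ) ⬝ᵥ s i = 1 ∧ s i ⬝ᵥ s i = 1)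
    (hp : ∀ i, 0 ≤ p i) (hpsum : ∑ i, p i = 1)
    (hdesign : ∑ i, p i • vecMulVec (s i) (s i) = (ℓ : ℝ)⁻¹ • (1 : Matrix (Fin ℓ) (Fin ℓ) ℝ))
    (M : Matrix (Fin ℓ) (Fin ℓ) ℝ) (hM : IsUnit M.det)
    (hMu : Mᵀ *ᵥ (1 : Fin ℓ → ℝ) = 1)
    (hin : ∀ i, (M⁻¹ *ᵥ s i) ⬝ᵥ (M⁻¹ *ᵥ s i) ≤ ((1 : Fin ℓ → ℝ) ⬝ᵥ (M⁻¹ *ᵥ s i)) ^ 2) :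
    (M⁻¹ * (M⁻¹)ᵀ).trace ≤ (ℓ : ℝ) := by
  have hvm : (1 : Fin ℓ → ℝ) ᵥ* M = 1 := by
    rw [Matrix.mulVec_transpose] at hMu
    exact hMu
  have hvm' : (1 : Fin ℓ → ℝ) ᵥ* M⁻¹ = 1 := by
    conv_lhs => rw [← hvm, Matrix.vecMul_vecMul, Matrix.mul_nonsing_inv M hM,
      Matrix.vecMul_one]
  have hu : ∀ i, (1 : Fin ℓ → ℝ) ⬝ᵥ (M⁻¹ *ᵥ s i) = 1 := by
    intro i
    rw [Matrix.dotProduct_mulVec, hvm', (hpure i).1]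
  have key := congrArg (fun X => (M⁻¹ * X * (M⁻¹)ᵀ).trace) hdesign
  simp only [Finset.mul_sum, Finset.sum_mul, Matrix.mul_smul, Matrix.smul_mul,
    Matrix.trace_sum, Matrix.trace_smul, aux_conj_s3, aux_trace, Matrix.mul_one,
    smul_eq_mul] at key
  -- key : ∑ i, p i * ((M⁻¹ *ᵥ s i) ⬝ᵥ (M⁻¹ *ᵥ s i)) = (ℓ:ℝ)⁻¹ * (M⁻¹ * (M⁻¹)ᵀ).trace
  have hsum_le : ∑ i, p i * ((M⁻¹ *ᵥ s i) ⬝ᵥ (M⁻¹ *ᵥ s i)) ≤ 1 := by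
    calc ∑ i, p i * ((M⁻¹ *ᵥ s i) ⬝ᵥ (M⁻¹ *ᵥ s i)) ≤ ∑ i, p i := by
          apply Finset.sum_le_sum
          intro i _
          have := (hin i).trans_eq (by rw [hu i, one_pow])
          nlinarith [hp i]
      _ = 1 := hpsum
  have hℓpos : (0:ℝ) < (ℓ:ℝ) := by exact_mod_cast hℓ
  rw [key] at hsum_le
  calc (M⁻¹ * (M⁻¹)ᵀ).trace = (ℓ:ℝ) * ((ℓ:ℝ)⁻¹ * (M⁻¹ * (M⁻¹)ᵀ).trace) := by
        field_simp
    _ ≤ (ℓ:ℝ) * 1 := by nlinarith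
    _ = (ℓ:ℝ) := by ring
end

section
/- Let ℓ ≤ n be positive integers, 𝕊 ⊆ ℝ^ℓ, and let 𝒫 ⊆ ℝ^n span an ℓ-dimensional subspace of ℝ^n. Let M ∈ ℝ^{n×ℓ} with Moore–Penrose pseudoinverse P satisfy P M = I_ℓ, Mᵀ u_n = u_ℓ, and M P p = p for every p ∈ 𝒫, and set 𝒮 := P𝒫 (the image of 𝒫 under p ↦ Pp). Then M ∈ ddi_𝕊(𝒫) if and only if I_ℓ ∈ ddi_𝕊(𝒮). -/
open Matrix

lemma gram_posdef {ℓ n : ℕ} (M : Matrix (Fin n) (Fin ℓ) ℝ) (P : Matrix (Fin ℓ) (Fin n) ℝ)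
    (hPM : P * M = 1) : (Mᵀ * M).PosDef := by
  rw [posDef_iff_dotProduct_mulVec]
  constructor
  · rw [← conjTranspose_eq_transpose_of_trivial]
    exact isHermitian_conjTranspose_mul_self M
  · intro x hx
    have hMx : M *ᵥ x ≠ 0 := by
      intro h
      apply hx
      have : P *ᵥ (M *ᵥ x) = x := by rw [mulVec_mulVec, hPM, one_mulVec]
      rw [h, mulVec_zero] at this
      exact this.symm
    have heq : star x ⬝ᵥ ((Mᵀ * M) *ᵥ x) = (M *ᵥ x) ⬝ᵥ (M *ᵥ x) := by
      rw [← mulVec_mulVec, dotProduct_mulVec, star_trivial, vecMul_transpose]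
    rw [heq]
    exact lt_of_le_of_ne (Finset.sum_nonneg fun i _ => mul_self_nonneg _)
      (fun h => hMx (dotProduct_self_eq_zero.mp h.symm))

/-- Let `𝒬 ⊆ ℝⁿ` span an `ℓ`-dimensional subspace, and let `M` be an
informationally complete quasi-measurement (with Moore–Penrose pseudoinverse `P`,
`P M = I`, `Mᵀ uₙ = uₗ`, and `M P p = p` for all `p ∈ 𝒬`).  With `𝒮 := P 𝒬`,
one has `M ∈ ddi_𝕊(𝒬)` if and only if `I ∈ ddi_𝕊(𝒮)`. -/
theorem stmt5 (ℓ n : ℕ) (hℓ : 0 < ℓ) (hn : ℓ ≤ n)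
    (𝕊 : Set (Fin ℓ → ℝ)) (𝒬 : Set (Fin n → ℝ))
    (hspan : Module.finrank ℝ (Submodule.span ℝ 𝒬) = ℓ)
    (M : Matrix (Fin n) (Fin ℓ) ℝ) (P : Matrix (Fin ℓ) (Fin n) ℝ)
    (hMP1 : M * P * M = M) (hMP2 : P * M * P = P)
    (hMP3 : (M * P)ᵀ = M * P) (hMP4 : (P * M)ᵀ = P * M)
    (hPM : P * M = 1)
    (hMu : Mᵀ *ᵥ (1 : Fin n → ℝ) = (1 : Fin ℓ → ℝ))
    (hfix : ∀ p ∈ 𝒬, M *ᵥ (P *ᵥ p) = p)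
    (𝒮 : Set (Fin ℓ → ℝ)) (h𝒮 : 𝒮 = (fun p => P *ᵥ p) '' 𝒬) :
    M ∈ ddi 𝕊 𝒬 ↔ (1 : Matrix (Fin ℓ) (Fin ℓ) ℝ) ∈ ddi 𝕊 𝒮 := by
  classical
  set d : ℝ := (Mᵀ * M).det with hd_def
  have hd : 0 < d := (gram_posdef M P hPM).det_pos
  -- M*P fixes span 𝒬
  have hfixspan : ∀ x ∈ Submodule.span ℝ 𝒬, (M * P) *ᵥ x = x := by
    intro x hx
    induction hx using Submodule.span_induction with
    | mem q hq => rw [← mulVec_mulVec]; exact hfix q hq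
    | zero => rw [mulVec_zero]
    | add a b _ _ ha hb => rw [mulVec_add, ha, hb]
    | smul c a _ ha => rw [mulVec_smul, ha]
  -- Key: for N consistent with 𝒬, M*P*N = N
  have hkey : ∀ N ∈ consistentSet 𝕊 𝒬, M * P * N = N := by
    intro N hN
    have hle : Submodule.span ℝ 𝒬 ≤ LinearMap.range (mulVecLin N) := by
      rw [Submodule.span_le]
      intro q hq
      obtain ⟨v, _, hv⟩ := hN.2 hq
      exact ⟨v, hv⟩
    have hrank : Module.finrank ℝ (LinearMap.range (mulVecLin N)) ≤ ℓ := by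
      have := LinearMap.finrank_range_le (mulVecLin N)
      simpa using this
    have heq : Submodule.span ℝ 𝒬 = LinearMap.range (mulVecLin N) :=
      Submodule.eq_of_le_of_finrank_le hle (by rw [hspan]; exact hrank)
    have hNv : ∀ v : Fin ℓ → ℝ, (M * P) *ᵥ (N *ᵥ v) = N *ᵥ v := by
      intro v
      apply hfixspan
      rw [heq]
      exact ⟨v, rfl⟩
    ext i j
    have h := hNv (Pi.single j 1)
    rw [mulVec_mulVec] at h
    have := congrFun h i
    simpa using this
  -- P*N is consistent with 𝒮 when N is consistent with 𝒬
  have hPN : ∀ N ∈ consistentSet 𝕊 𝒬, P * N ∈ consistentSet 𝕊 𝒮 := by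
    intro N hN
    constructor
    · have h1 : (M * (P * N))ᵀ *ᵥ (1 : Fin n → ℝ) = (1 : Fin ℓ → ℝ) := by
        rw [← Matrix.mul_assoc, hkey N hN]; exact hN.1
      calc (P * N)ᵀ *ᵥ (1 : Fin ℓ → ℝ) = (P * N)ᵀ *ᵥ (Mᵀ *ᵥ (1 : Fin n → ℝ)) := by rw [hMu]
        _ = ((P * N)ᵀ * Mᵀ) *ᵥ (1 : Fin n → ℝ) := by rw [mulVec_mulVec]
        _ = (M * (P * N))ᵀ *ᵥ (1 : Fin n → ℝ) := by rw [transpose_mul M (P * N)]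
        _ = (1 : Fin ℓ → ℝ) := h1
    · rintro s hs
      rw [h𝒮] at hs
      obtain ⟨q, hq, rfl⟩ := hs
      obtain ⟨v, hv, hvq⟩ := hN.2 hq
      refine ⟨v, hv, ?_⟩
      dsimp only at hvq ⊢
      rw [← mulVec_mulVec, hvq]
  -- M*N' is consistent with 𝒬 when N' is consistent with 𝒮
  have hMN : ∀ N' ∈ consistentSet 𝕊 𝒮, M * N' ∈ consistentSet 𝕊 (𝒬 : Set (Fin n → ℝ)) := by
    intro N' hN'
    constructor
    · calc (M * N')ᵀ *ᵥ (1 : Fin n → ℝ) = (N'ᵀ * Mᵀ) *ᵥ (1 : Fin n → ℝ) := by rw [transpose_mul]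
        _ = N'ᵀ *ᵥ (Mᵀ *ᵥ (1 : Fin n → ℝ)) := by rw [mulVec_mulVec]
        _ = N'ᵀ *ᵥ (1 : Fin ℓ → ℝ) := by rw [hMu]
        _ = (1 : Fin ℓ → ℝ) := hN'.1
    · intro q hq
      have hs : P *ᵥ q ∈ 𝒮 := by rw [h𝒮]; exact ⟨q, hq, rfl⟩
      obtain ⟨v, hv, hvq⟩ := hN'.2 hs
      refine ⟨v, hv, ?_⟩
      dsimp only at hvq ⊢
      rw [← mulVec_mulVec, hvq, hfix q hq]
  -- determinant identities
  have hdetPN : ∀ N ∈ consistentSet 𝕊 𝒬,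
      (Nᵀ * N).det = ((P * N)ᵀ * (P * N)).det * d := by
    intro N hN
    have hNeq : N = M * (P * N) := by rw [← Matrix.mul_assoc, hkey N hN]
    calc (Nᵀ * N).det = ((M * (P * N))ᵀ * (M * (P * N))).det := by rw [← hNeq]
      _ = ((P * N)ᵀ * (Mᵀ * M) * (P * N)).det := by
          rw [transpose_mul M (P * N)]; simp only [Matrix.mul_assoc]
      _ = ((P * N)ᵀ * (P * N)).det * d := by
          rw [det_mul, det_mul, det_mul, det_transpose]; ring
  have hdetMN : ∀ N' : Matrix (Fin ℓ) (Fin ℓ) ℝ,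
      ((M * N')ᵀ * (M * N')).det = (N'ᵀ * N').det * d := by
    intro N'
    calc ((M * N')ᵀ * (M * N')).det = (N'ᵀ * (Mᵀ * M) * N').det := by
          rw [transpose_mul M N']; simp only [Matrix.mul_assoc]
      _ = (N'ᵀ * N').det * d := by
          rw [det_mul, det_mul, det_mul, det_transpose]; ring
  constructor
  · rintro ⟨hMc, hMmin⟩
    have hone : (1 : Matrix (Fin ℓ) (Fin ℓ) ℝ) ∈ consistentSet 𝕊 𝒮 := by
      constructor
      · rw [transpose_one, one_mulVec]
      · rintro s hs
        rw [h𝒮] at hs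
        obtain ⟨q, hq, rfl⟩ := hs
        obtain ⟨v, hv, hvq⟩ := hMc.2 hq
        refine ⟨P *ᵥ q, ?_, one_mulVec _⟩
        have : P *ᵥ q = v := by rw [← hvq, mulVec_mulVec, hPM, one_mulVec]
        rw [this]; exact hv
    refine ⟨hone, fun N' hN' => ?_⟩
    have h1 := hMmin (M * N') (hMN N' hN')
    rw [hdetMN N'] at h1
    have h2 : 1 ≤ (N'ᵀ * N').det := by nlinarith [h1]
    simpa using h2
  · rintro ⟨hone, honemin⟩
    have hMc : M ∈ consistentSet 𝕊 𝒬 := by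
      refine ⟨hMu, fun q hq => ?_⟩
      have hs : P *ᵥ q ∈ 𝒮 := by rw [h𝒮]; exact ⟨q, hq, rfl⟩
      obtain ⟨v, hv, hvq⟩ := hone.2 hs
      dsimp only at hvq
      rw [one_mulVec] at hvq
      exact ⟨P *ᵥ q, hvq ▸ hv, hfix q hq⟩
    refine ⟨hMc, fun N hN => ?_⟩
    have h1 := honemin (P * N) (hPN N hN)
    simp only [transpose_one, one_mul, det_one] at h1
    rw [hdetPN N hN]
    calc d = 1 * d := (one_mul d).symm
      _ ≤ ((P * N)ᵀ * (P * N)).det * d := by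
          exact mul_le_mul_of_nonneg_right h1 hd.le
end

section
/- Let ℓ ≤ n be positive integers, 𝕊 ⊆ ℝ^ℓ, and let 𝒫 ⊆ ℝ^n span an ℓ-dimensional subspace of ℝ^n. Let M ∈ ℝ^{n×ℓ} with Moore–Penrose pseudoinverse P satisfy P M = I_ℓ, Mᵀ u_n = u_ℓ, and M P p = p for every p ∈ 𝒫. Then for every N ∈ ℳ_𝕊(𝒫), the matrix P N belongs to ℳ_𝕊(P𝒫): (P N)ᵀ u_ℓ = u_ℓ and P𝒫 ⊆ (P N)𝕊. -/
open Matrix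

/-- Let `𝒬 ⊆ ℝⁿ` span an `ℓ`-dimensional subspace and let `M` be an
informationally complete quasi-measurement with Moore–Penrose pseudoinverse `P`
(`P M = I`, `Mᵀ uₙ = uₗ`, `M P p = p` for all `p ∈ 𝒬`).  Then for every
`N ∈ ℳ_𝕊(𝒬)`, the product `P N` belongs to `ℳ_𝕊(P 𝒬)`:
`(P N)ᵀ uₗ = uₗ` and `P 𝒬 ⊆ (P N) 𝕊`. -/
theorem stmt7 (ℓ n : ℕ) (hℓ : 0 < ℓ) (hn : ℓ ≤ n)
    (𝕊 : Set (Fin ℓ → ℝ)) (𝒬 : Set (Fin n → ℝ))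
    (hspan : Module.finrank ℝ (Submodule.span ℝ 𝒬) = ℓ)
    (M : Matrix (Fin n) (Fin ℓ) ℝ) (P : Matrix (Fin ℓ) (Fin n) ℝ)
    (hMP1 : M * P * M = M) (hMP2 : P * M * P = P)
    (hMP3 : (M * P)ᵀ = M * P) (hMP4 : (P * M)ᵀ = P * M)
    (hPM : P * M = 1)
    (hMu : Mᵀ *ᵥ (1 : Fin n → ℝ) = (1 : Fin ℓ → ℝ))
    (hfix : ∀ p ∈ 𝒬, M *ᵥ (P *ᵥ p) = p)
    (N : Matrix (Fin n) (Fin ℓ) ℝ) (hN : N ∈ consistentSet 𝕊 𝒬) :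
    P * N ∈ consistentSet 𝕊 ((fun p => P *ᵥ p) '' 𝒬) := by
  obtain ⟨hNu, hNQ⟩ := hN
  -- the vector `w := uₙ - Pᵀ uₗ`
  set w : Fin n → ℝ := (1 : Fin n → ℝ) - Pᵀ *ᵥ (1 : Fin ℓ → ℝ) with hw
  -- the linear functional `x ↦ ⟨x, w⟩`
  let f : (Fin n → ℝ) →ₗ[ℝ] ℝ :=
    { toFun := fun x => x ⬝ᵥ w
      map_add' := fun x y => add_dotProduct x y w
      map_smul' := fun c x => smul_dotProduct c x w }
  -- `w` is orthogonal to every element of `𝒬`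
  have hwQ : ∀ p ∈ 𝒬, f p = 0 := by
    intro p hp
    have h1 : p ⬝ᵥ (Pᵀ *ᵥ (1 : Fin ℓ → ℝ)) = (P *ᵥ p) ⬝ᵥ (1 : Fin ℓ → ℝ) := by
      rw [dotProduct_mulVec, vecMul_transpose]
    have h2 : p ⬝ᵥ (1 : Fin n → ℝ) = (P *ᵥ p) ⬝ᵥ (1 : Fin ℓ → ℝ) := by
      calc p ⬝ᵥ (1 : Fin n → ℝ) = (1 : Fin n → ℝ) ⬝ᵥ p := dotProduct_comm _ _
        _ = (1 : Fin n → ℝ) ⬝ᵥ (M *ᵥ (P *ᵥ p)) := by rw [hfix p hp]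
        _ = ((1 : Fin n → ℝ) ᵥ* M) ⬝ᵥ (P *ᵥ p) := dotProduct_mulVec _ _ _
        _ = (Mᵀ *ᵥ (1 : Fin n → ℝ)) ⬝ᵥ (P *ᵥ p) := by rw [mulVec_transpose]
        _ = (1 : Fin ℓ → ℝ) ⬝ᵥ (P *ᵥ p) := by rw [hMu]
        _ = (P *ᵥ p) ⬝ᵥ (1 : Fin ℓ → ℝ) := dotProduct_comm _ _
    show p ⬝ᵥ w = 0
    rw [hw, dotProduct_sub, h1, h2, sub_self]
  -- the span of `𝒬` is the range of `N`
  have hle : Submodule.span ℝ 𝒬 ≤ LinearMap.range N.mulVecLin := by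
    rw [Submodule.span_le]
    intro p hp
    obtain ⟨s, _, hs⟩ := hNQ hp
    exact ⟨s, hs⟩
  have hrange : Submodule.span ℝ 𝒬 = LinearMap.range N.mulVecLin := by
    refine Submodule.eq_of_le_of_finrank_le hle ?_
    rw [hspan]
    exact (LinearMap.finrank_range_le _).trans (by simp)
  -- hence `w` is orthogonal to every column of `N`
  have hker : LinearMap.range N.mulVecLin ≤ LinearMap.ker f := by
    rw [← hrange, Submodule.span_le]
    intro p hp
    exact hwQ p hp
  have hcol : ∀ v : Fin ℓ → ℝ, (N *ᵥ v) ⬝ᵥ w = 0 := by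
    intro v
    exact hker ⟨v, rfl⟩
  have hNw : Nᵀ *ᵥ w = 0 := by
    funext j
    have := hcol (Pi.single j 1)
    simpa [mulVec, dotProduct, transpose, mul_comm, Pi.single_apply, Finset.sum_ite_eq]
      using this
  constructor
  · -- (P * N)ᵀ *ᵥ 1 = 1
    have : (P * N)ᵀ *ᵥ (1 : Fin ℓ → ℝ) = Nᵀ *ᵥ (Pᵀ *ᵥ (1 : Fin ℓ → ℝ)) := by
      rw [transpose_mul, ← mulVec_mulVec]
    rw [this]
    have hP1 : Pᵀ *ᵥ (1 : Fin ℓ → ℝ) = (1 : Fin n → ℝ) - w := by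
      rw [hw]; ring_nf
    rw [hP1, mulVec_sub, hNw, hNu, sub_zero]
  · -- P 𝒬 ⊆ (P N) 𝕊
    rintro _ ⟨p, hp, rfl⟩
    obtain ⟨s, hs, hps⟩ := hNQ hp
    exact ⟨s, hs, by show (P * N) *ᵥ s = P *ᵥ p; rw [← mulVec_mulVec]; rw [show N *ᵥ s = p from hps]⟩
end

section
/- Let ℓ ≤ n be positive integers, 𝕊 ⊆ ℝ^ℓ, and let 𝒫 ⊆ ℝ^n span an ℓ-dimensional subspace of ℝ^n. Let M ∈ ℝ^{n×ℓ} with Moore–Penrose pseudoinverse P satisfy P M = I_ℓ, Mᵀ u_n = u_ℓ, and M P p = p for every p ∈ 𝒫. Then ℳ_𝕊(P𝒫) = {P N : N ∈ ℳ_𝕊(𝒫)} and ℳ_𝕊(𝒫) = {M L : L ∈ ℳ_𝕊(P𝒫)}; that is, left multiplication by M is a bijection from ℳ_𝕊(P𝒫) onto ℳ_𝕊(𝒫), with inverse given by left multiplication by P. -/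
open Matrix

theorem stmt8_aux (ℓ n : ℕ)
    (𝒬 : Set (Fin n → ℝ))
    (hspan : Module.finrank ℝ (Submodule.span ℝ 𝒬) = ℓ)
    (M : Matrix (Fin n) (Fin ℓ) ℝ) (P : Matrix (Fin ℓ) (Fin n) ℝ)
    (hfix : ∀ p ∈ 𝒬, M *ᵥ (P *ᵥ p) = p)
    (N : Matrix (Fin n) (Fin ℓ) ℝ) (hN : ∀ q ∈ 𝒬, ∃ s, N *ᵥ s = q) :
    M * P * N = N := by
  -- the fixed set of `x ↦ M *ᵥ (P *ᵥ x)` contains the span of 𝒬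
  have hfix' : ∀ x ∈ Submodule.span ℝ 𝒬, M *ᵥ (P *ᵥ x) = x := by
    intro x hx
    induction hx using Submodule.span_induction with
    | mem p hp => exact hfix p hp
    | zero => simp [Matrix.mulVec_zero]
    | add a b _ _ ha hb => simp [Matrix.mulVec_add, ha, hb]
    | smul c a _ ha => simp [Matrix.mulVec_smul, ha]
  -- the range of `N` equals the span of 𝒬
  have hle : Submodule.span ℝ 𝒬 ≤ LinearMap.range N.mulVecLin := by
    rw [Submodule.span_le]
    intro q hq
    obtain ⟨s, hs⟩ := hN q hq
    exact ⟨s, hs⟩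
  have hrange : Submodule.span ℝ 𝒬 = LinearMap.range N.mulVecLin := by
    haveI : FiniteDimensional ℝ (Fin n → ℝ) := inferInstance
    apply Submodule.eq_of_le_of_finrank_le hle
    calc Module.finrank ℝ (LinearMap.range N.mulVecLin)
        ≤ Module.finrank ℝ (Fin ℓ → ℝ) := LinearMap.finrank_range_le _
      _ = ℓ := Module.finrank_fin_fun ℝ
      _ = Module.finrank ℝ (Submodule.span ℝ 𝒬) := hspan.symm
  have hcol : ∀ j, M *ᵥ (P *ᵥ (N *ᵥ Pi.single j 1)) = N *ᵥ Pi.single j 1 := by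
    intro j
    apply hfix'
    rw [hrange]
    exact ⟨Pi.single j 1, rfl⟩
  ext i j
  have h2 : (M * P * N) *ᵥ Pi.single j 1 = N *ᵥ Pi.single j 1 := by
    rw [← Matrix.mulVec_mulVec, ← Matrix.mulVec_mulVec]
    exact hcol j
  simpa using congrFun h2 i

/-- Let `𝒬 ⊆ ℝⁿ` span an `ℓ`-dimensional subspace and let `M` be an
informationally complete quasi-measurement with Moore–Penrose pseudoinverse `P`
(`P M = I`, `Mᵀ uₙ = uₗ`, `M P p = p` for all `p ∈ 𝒬`).  Then
`ℳ_𝕊(P 𝒬) = P ℳ_𝕊(𝒬)` and `ℳ_𝕊(𝒬) = M ℳ_𝕊(P 𝒬)`, i.e. left multiplication by `M`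
is a bijection from `ℳ_𝕊(P 𝒬)` onto `ℳ_𝕊(𝒬)` with inverse left multiplication by `P`. -/
theorem stmt8 (ℓ n : ℕ) (hℓ : 0 < ℓ) (hn : ℓ ≤ n)
    (𝕊 : Set (Fin ℓ → ℝ)) (𝒬 : Set (Fin n → ℝ))
    (hspan : Module.finrank ℝ (Submodule.span ℝ 𝒬) = ℓ)
    (M : Matrix (Fin n) (Fin ℓ) ℝ) (P : Matrix (Fin ℓ) (Fin n) ℝ)
    (hMP1 : M * P * M = M) (hMP2 : P * M * P = P)
    (hMP3 : (M * P)ᵀ = M * P) (hMP4 : (P * M)ᵀ = P * M)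
    (hPM : P * M = 1)
    (hMu : Mᵀ *ᵥ (1 : Fin n → ℝ) = (1 : Fin ℓ → ℝ))
    (hfix : ∀ p ∈ 𝒬, M *ᵥ (P *ᵥ p) = p) :
    consistentSet 𝕊 ((fun p => P *ᵥ p) '' 𝒬) =
        (fun N => P * N) '' consistentSet 𝕊 𝒬 ∧
      consistentSet 𝕊 𝒬 =
        (fun L => M * L) '' consistentSet 𝕊 ((fun p => P *ᵥ p) '' 𝒬) := by
  -- Basic facts
  have hMLu : ∀ L : Matrix (Fin ℓ) (Fin ℓ) ℝ,
      (M * L)ᵀ *ᵥ (1 : Fin n → ℝ) = Lᵀ *ᵥ (1 : Fin ℓ → ℝ) := by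
    intro L
    rw [Matrix.transpose_mul, ← Matrix.mulVec_mulVec, hMu]
  -- If L ∈ ℳ_𝕊(P𝒬), then M*L ∈ ℳ_𝕊(𝒬)
  have hML : ∀ L ∈ consistentSet 𝕊 ((fun p => P *ᵥ p) '' 𝒬),
      M * L ∈ consistentSet 𝕊 𝒬 := by
    rintro L ⟨hL1, hL2⟩
    constructor
    · rw [hMLu L, hL1]
    · intro q hq
      obtain ⟨s, hs𝕊, hs⟩ := hL2 ⟨q, hq, rfl⟩
      refine ⟨s, hs𝕊, ?_⟩
      simp only at hs ⊢
      rw [← Matrix.mulVec_mulVec, hs, hfix q hq]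
  -- If N ∈ ℳ_𝕊(𝒬), then M*(P*N) = N
  have hMPN : ∀ N ∈ consistentSet 𝕊 𝒬, M * (P * N) = N := by
    rintro N ⟨hN1, hN2⟩
    rw [← Matrix.mul_assoc]
    apply stmt8_aux ℓ n 𝒬 hspan M P hfix
    intro q hq
    obtain ⟨s, _, hs⟩ := hN2 hq
    exact ⟨s, hs⟩
  -- If N ∈ ℳ_𝕊(𝒬), then P*N ∈ ℳ_𝕊(P𝒬)
  have hPN : ∀ N ∈ consistentSet 𝕊 𝒬,
      P * N ∈ consistentSet 𝕊 ((fun p => P *ᵥ p) '' 𝒬) := by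
    intro N hN
    obtain ⟨hN1, hN2⟩ := hN
    constructor
    · have := hMLu (P * N)
      rw [hMPN N ⟨hN1, hN2⟩, hN1] at this
      exact this.symm
    · rintro _ ⟨q, hq, rfl⟩
      obtain ⟨s, hs𝕊, hs⟩ := hN2 hq
      refine ⟨s, hs𝕊, ?_⟩
      simp only at hs ⊢
      rw [← Matrix.mulVec_mulVec, hs]
  constructor
  · ext L
    constructor
    · intro hL
      refine ⟨M * L, hML L hL, ?_⟩
      simp [← Matrix.mul_assoc, hPM]
    · rintro ⟨N, hN, rfl⟩
      exact hPN N hN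
  · ext N
    constructor
    · intro hN
      exact ⟨P * N, hPN N hN, hMPN N hN⟩
    · rintro ⟨L, hL, rfl⟩
      exact hML L hL
end

section
/- Let M ∈ ℝ^{n×ℓ} have Moore–Penrose pseudoinverse P ∈ ℝ^{ℓ×n}. If Mᵀ u_n = P M u_ℓ, then Pᵀ u_ℓ = M P u_n. (The set of quasi-measurements is closed under pseudoinversion.) -/
open Matrix

/-- closure under pseudoinversion.  Let `M ∈ ℝ^{n×ℓ}` have
Moore–Penrose pseudoinverse `P ∈ ℝ^{ℓ×n}`.  If `Mᵀ uₙ = P M uₗ`, then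
`Pᵀ uₗ = M P uₙ`. -/
theorem stmt12 (ℓ n : ℕ) (hℓ : 0 < ℓ) (hn : 0 < n)
    (M : Matrix (Fin n) (Fin ℓ) ℝ) (P : Matrix (Fin ℓ) (Fin n) ℝ)
    (hMP1 : M * P * M = M) (hMP2 : P * M * P = P)
    (hMP3 : (M * P)ᵀ = M * P) (hMP4 : (P * M)ᵀ = P * M)
    (h : Mᵀ *ᵥ (1 : Fin n → ℝ) = (P * M) *ᵥ (1 : Fin ℓ → ℝ)) :
    Pᵀ *ᵥ (1 : Fin ℓ → ℝ) = (M * P) *ᵥ (1 : Fin n → ℝ) := by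
  have hP : Pᵀ = Pᵀ * (P * M) := by
    conv_rhs => rw [← hMP4, ← transpose_mul, hMP2]
  calc Pᵀ *ᵥ (1 : Fin ℓ → ℝ) = (Pᵀ * (P * M)) *ᵥ 1 := by rw [← hP]
    _ = Pᵀ *ᵥ ((P * M) *ᵥ 1) := by rw [← mulVec_mulVec]
    _ = Pᵀ *ᵥ (Mᵀ *ᵥ 1) := by rw [← h]
    _ = (Pᵀ * Mᵀ) *ᵥ 1 := by rw [mulVec_mulVec]
    _ = (M * P)ᵀ *ᵥ 1 := by rw [transpose_mul]
    _ = (M * P) *ᵥ 1 := by rw [hMP3]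
end

section
/- Let ℓ be a positive integer and let G := {O in the orthogonal group of ℝ^{ℓ×ℓ} : O u_ℓ = u_ℓ}, a compact topological group under matrix multiplication, with Haar probability measure μ. Then for every pure state s ∈ ℝ^ℓ (u_ℓ·s = 1 and ‖s‖ = 1) and all indices i, j: ∫_G (O s)_i (O s)_j dμ(O) = (1/ℓ)·δ_{ij}; that is, ∫_G O (s sᵀ) Oᵀ dμ(O) = (1/ℓ)·I_ℓ. -/
open Matrix MeasureTheory

/-- Matrices inherit the (Borel) product measurable structure of `ℝ^{ℓ×ℓ}`. -/
instance matrixMeasurableSpace (ℓ : ℕ) : MeasurableSpace (Matrix (Fin ℓ) (Fin ℓ) ℝ) :=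
  MeasurableSpace.pi

/-- The permutation matrix of `σ`. -/
noncomputable def permMat (ℓ : ℕ) (σ : Equiv.Perm (Fin ℓ)) : Matrix (Fin ℓ) (Fin ℓ) ℝ :=
  Matrix.of fun i j => if i = σ j then 1 else 0

lemma permMat_mulVec {ℓ : ℕ} (σ : Equiv.Perm (Fin ℓ)) (v : Fin ℓ → ℝ) :
    permMat ℓ σ *ᵥ v = fun i => v (σ.symm i) := by
  funext i
  simp [permMat, Matrix.mulVec, dotProduct, eq_comm (a := i)]
  rw [Finset.sum_eq_single (σ.symm i)] <;> simp +contextual [Equiv.eq_symm_apply, eq_comm]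

lemma permMat_orth {ℓ : ℕ} (σ : Equiv.Perm (Fin ℓ)) : (permMat ℓ σ)ᵀ * permMat ℓ σ = 1 := by
  ext a b
  simp only [permMat, Matrix.mul_apply, Matrix.transpose_apply, Matrix.of_apply,
    Matrix.one_apply, ite_mul, one_mul, zero_mul]
  rw [Finset.sum_eq_single (σ a)]
  · simp [EmbeddingLike.apply_eq_iff_eq, eq_comm]
  · intro k _ hk; simp [hk]
  · simp

lemma permMat_ones {ℓ : ℕ} (σ : Equiv.Perm (Fin ℓ)) : permMat ℓ σ *ᵥ (1 : Fin ℓ → ℝ) = 1 := by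
  rw [permMat_mulVec]; funext i; simp [Pi.one_apply]

/-- Let `G` be the stabilizer of the all-ones vector `uₗ` in the
orthogonal group of `ℝ^{ℓ×ℓ}`, a compact group, and let `μ` be its Haar probability
measure, viewed as a probability measure on matrices concentrated on `G` and invariant
under left translation by elements of `G`.  Then for every pure state `s`
(`uₗ ⬝ s = 1`, `‖s‖ = 1`) and all indices `i j`,
`∫ (O s)ᵢ (O s)ⱼ dμ(O) = (1/ℓ) δᵢⱼ`, i.e. `∫ O s sᵀ Oᵀ dμ(O) = (1/ℓ) I`. -/
theorem stmt13 (ℓ : ℕ) (hℓ : 0 < ℓ)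
    (G : Set (Matrix (Fin ℓ) (Fin ℓ) ℝ))
    (hG : G = {O | Oᵀ * O = 1 ∧ O *ᵥ (1 : Fin ℓ → ℝ) = (1 : Fin ℓ → ℝ)})
    (μ : Measure (Matrix (Fin ℓ) (Fin ℓ) ℝ)) [IsProbabilityMeasure μ]
    (hsupp : ∀ᵐ O ∂μ, O ∈ G)
    (hinv : ∀ R ∈ G, Measure.map (fun O => R * O) μ = μ)
    (s : Fin ℓ → ℝ)
    (hs1 : (1 : Fin ℓ → ℝ) ⬝ᵥ s = 1) (hs2 : s ⬝ᵥ s = 1)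
    (i j : Fin ℓ) :
    ∫ O, (O *ᵥ s) i * (O *ᵥ s) j ∂μ = (ℓ : ℝ)⁻¹ * (if i = j then 1 else 0) := by
  classical
  -- measurability of coordinates of `O *ᵥ s`
  have hmeas : ∀ k, Measurable fun O : Matrix (Fin ℓ) (Fin ℓ) ℝ => (O *ᵥ s) k := by
    intro k
    simp only [Matrix.mulVec, dotProduct]
    refine Finset.measurable_sum _ fun l _ => ?_
    have h1 : Measurable fun O : Matrix (Fin ℓ) (Fin ℓ) ℝ => O k l :=
      (measurable_pi_apply k).eval
    exact h1.mul_const (s l)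
  -- a.e. bound on coordinates
  set C : ℝ := ∑ l, |s l| with hCdef
  have hC0 : 0 ≤ C := Finset.sum_nonneg fun _ _ => abs_nonneg _
  have hbd : ∀ᵐ O ∂μ, ∀ k, |(O *ᵥ s) k| ≤ C := by
    filter_upwards [hsupp] with O hO k
    rw [hG] at hO
    have hent : ∀ a b, |O a b| ≤ 1 := by
      intro a b
      have h1 : ∑ r, O r b * O r b = 1 := by
        have := congrArg (fun M => M b b) hO.1
        simpa [Matrix.mul_apply, Matrix.one_apply] using this
      have h2 : O a b * O a b ≤ 1 := by
        rw [← h1]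
        exact Finset.single_le_sum (f := fun r => O r b * O r b)
          (fun r _ => mul_self_nonneg _) (Finset.mem_univ a)
      nlinarith [abs_nonneg (O a b), sq_abs (O a b)]
    calc |(O *ᵥ s) k| ≤ ∑ l, |O k l * s l| := by
          simpa [Matrix.mulVec, dotProduct] using
            Finset.abs_sum_le_sum_abs (fun l => O k l * s l) Finset.univ
      _ ≤ ∑ l, |s l| := Finset.sum_le_sum fun l _ => by
          rw [abs_mul]; exact mul_le_of_le_one_left (abs_nonneg _) (hent k l)
  -- integrability
  have hint2 : ∀ a b, Integrable (fun O => (O *ᵥ s) a * (O *ᵥ s) b) μ := by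
    intro a b
    refine (integrable_const (C * C)).mono' ((hmeas a).mul (hmeas b)).aestronglyMeasurable ?_
    filter_upwards [hbd] with O hO
    rw [Real.norm_eq_abs, abs_mul]
    exact mul_le_mul (hO a) (hO b) (abs_nonneg _) hC0
  -- invariance under left multiplication
  have hswap : ∀ R ∈ G, ∀ g : Matrix (Fin ℓ) (Fin ℓ) ℝ → ℝ, Measurable g →
      ∫ O, g (R * O) ∂μ = ∫ O, g O ∂μ := by
    intro R hR g hg
    have hφ : Measurable fun O : Matrix (Fin ℓ) (Fin ℓ) ℝ => R * O := by
      apply measurable_pi_lambda; intro a; apply measurable_pi_lambda; intro b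
      simp only [Matrix.mul_apply]
      refine Finset.measurable_sum _ fun k _ => ?_
      have h1 : Measurable fun O : Matrix (Fin ℓ) (Fin ℓ) ℝ => O k b :=
        (measurable_pi_apply k).eval
      exact h1.const_mul (R a k)
    conv_rhs => rw [← hinv R hR]
    rw [integral_map hφ.aemeasurable hg.aestronglyMeasurable]
  have permG : ∀ σ : Equiv.Perm (Fin ℓ), permMat ℓ σ ∈ G := by
    intro σ; rw [hG]; exact ⟨permMat_orth σ, permMat_ones σ⟩
  -- permutation invariance of the second moments and means
  have hM : ∀ (σ : Equiv.Perm (Fin ℓ)) (a b : Fin ℓ),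
      ∫ O, (O *ᵥ s) a * (O *ᵥ s) b ∂μ = ∫ O, (O *ᵥ s) (σ a) * (O *ᵥ s) (σ b) ∂μ := by
    intro σ a b
    have h := hswap (permMat ℓ σ.symm) (permG _)
      (fun O => (O *ᵥ s) a * (O *ᵥ s) b) ((hmeas a).mul (hmeas b))
    rw [← h]
    congr 1; funext O
    simp only [← Matrix.mulVec_mulVec, permMat_mulVec, Equiv.symm_symm]
  have hm : ∀ (σ : Equiv.Perm (Fin ℓ)) (a : Fin ℓ),
      ∫ O, (O *ᵥ s) a ∂μ = ∫ O, (O *ᵥ s) (σ a) ∂μ := by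
    intro σ a
    have h := hswap (permMat ℓ σ.symm) (permG _) (fun O => (O *ᵥ s) a) (hmeas a)
    rw [← h]
    congr 1; funext O
    simp only [← Matrix.mulVec_mulVec, permMat_mulVec, Equiv.symm_symm]
  -- a.e. facts on G
  have hfix : ∀ O ∈ G, Oᵀ *ᵥ (1 : Fin ℓ → ℝ) = 1 := by
    intro O hO; rw [hG] at hO
    conv_lhs => rw [← hO.2]
    rw [Matrix.mulVec_mulVec, hO.1, Matrix.one_mulVec]
  have hones : ∀ᵐ O ∂μ, ∑ k, (O *ᵥ s) k = 1 := by
    filter_upwards [hsupp] with O hO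
    have : (1 : Fin ℓ → ℝ) ⬝ᵥ (O *ᵥ s) = 1 := by
      rw [Matrix.dotProduct_mulVec, ← Matrix.mulVec_transpose, hfix O hO, hs1]
    simpa [dotProduct, Pi.one_apply] using this
  have hnorm : ∀ᵐ O ∂μ, ∑ k, (O *ᵥ s) k * (O *ᵥ s) k = 1 := by
    filter_upwards [hsupp] with O hO
    have hO' := hO; rw [hG] at hO'
    have : (O *ᵥ s) ⬝ᵥ (O *ᵥ s) = 1 := by
      rw [Matrix.dotProduct_mulVec, ← Matrix.mulVec_transpose,
        Matrix.mulVec_mulVec, hO'.1, Matrix.one_mulVec, hs2]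
    simpa [dotProduct] using this
  -- integrability of single coordinates
  have hint1 : ∀ a, Integrable (fun O => (O *ᵥ s) a) μ := by
    intro a
    refine (integrable_const C).mono' (hmeas a).aestronglyMeasurable ?_
    filter_upwards [hbd] with O hO
    simpa [Real.norm_eq_abs] using hO a
  -- sum of means is 1
  have hm_sum : ∑ k, ∫ O, (O *ᵥ s) k ∂μ = 1 := by
    rw [← integral_finset_sum _ (fun k _ => hint1 k), integral_congr_ae hones]
    simp
  -- each mean is 1/ℓ
  have hm_const : ∀ k, ∫ O, (O *ᵥ s) k ∂μ = (ℓ : ℝ)⁻¹ := by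
    intro k
    have hall : ∀ k', ∫ O, (O *ᵥ s) k' ∂μ = ∫ O, (O *ᵥ s) k ∂μ := fun k' => by
      simpa using hm (Equiv.swap k' k) k'
    have hsum : (ℓ : ℝ) * ∫ O, (O *ᵥ s) k ∂μ = 1 := by
      rw [← hm_sum, Finset.sum_congr rfl (fun k' _ => hall k')]
      simp [mul_comm]
    field_simp at hsum ⊢
    linarith
  -- trace is 1
  have htr : ∑ k, ∫ O, (O *ᵥ s) k * (O *ᵥ s) k ∂μ = 1 := by
    rw [← integral_finset_sum _ (fun k _ => hint2 k k), integral_congr_ae hnorm]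
    simp
  -- diagonal entries are 1/ℓ
  have hdiag : ∀ a, ∫ O, (O *ᵥ s) a * (O *ᵥ s) a ∂μ = (ℓ : ℝ)⁻¹ := by
    intro a
    have hall : ∀ k, ∫ O, (O *ᵥ s) k * (O *ᵥ s) k ∂μ
        = ∫ O, (O *ᵥ s) a * (O *ᵥ s) a ∂μ := fun k => by
      simpa using hM (Equiv.swap k a) k k
    have hsum : (ℓ : ℝ) * ∫ O, (O *ᵥ s) a * (O *ᵥ s) a ∂μ = 1 := by
      rw [← htr, Finset.sum_congr rfl (fun k _ => hall k)]
      simp [mul_comm]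
    field_simp at hsum ⊢
    linarith
  -- row sums are 1/ℓ
  have hrow : ∀ a, ∑ k, ∫ O, (O *ᵥ s) a * (O *ᵥ s) k ∂μ = (ℓ : ℝ)⁻¹ := by
    intro a
    rw [← integral_finset_sum _ (fun k _ => hint2 a k)]
    have hcongr : (fun O => ∑ k, (O *ᵥ s) a * (O *ᵥ s) k) =ᵐ[μ] fun O => (O *ᵥ s) a := by
      filter_upwards [hones] with O hO
      rw [← Finset.mul_sum, hO, mul_one]
    rw [integral_congr_ae hcongr, hm_const a]
  by_cases hij : i = j
  · subst hij; simp [hdiag i]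
  · simp only [if_neg hij, mul_zero]
    have hall : ∀ k, k ≠ i → ∫ O, (O *ᵥ s) i * (O *ᵥ s) k ∂μ
        = ∫ O, (O *ᵥ s) i * (O *ᵥ s) j ∂μ := by
      intro k hk
      rcases eq_or_ne k j with rfl | hkj
      · rfl
      · have h := hM (Equiv.swap j k) i j
        rw [Equiv.swap_apply_of_ne_of_ne hij (Ne.symm hk), Equiv.swap_apply_left] at h
        exact h.symm
    have hsplit := hrow i
    rw [← Finset.add_sum_erase _ _ (Finset.mem_univ i), hdiag i,
      Finset.sum_congr rfl (fun k hk => hall k (Finset.ne_of_mem_erase hk))] at hsplit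
    rw [Finset.sum_const, Finset.card_erase_of_mem (Finset.mem_univ i),
      Finset.card_univ, Fintype.card_fin, nsmul_eq_mul] at hsplit
    have hℓ2 : 2 ≤ ℓ := by
      have : Nontrivial (Fin ℓ) := ⟨⟨i, j, hij⟩⟩
      have h := Fintype.one_lt_card (α := Fin ℓ)
      simp only [Fintype.card_fin] at h
      omega
    have hne : ((ℓ - 1 : ℕ) : ℝ) ≠ 0 := by
      have : 1 ≤ ℓ - 1 := by omega
      positivity
    have hz : ((ℓ - 1 : ℕ) : ℝ) * ∫ O, (O *ᵥ s) i * (O *ᵥ s) j ∂μ = 0 := by linarith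
    exact (mul_eq_zero.mp hz).resolve_left hne
end

section
/- Let ℓ be a positive integer and let A ∈ ℝ^{ℓ×ℓ} satisfy O A Oᵀ = A for every orthogonal matrix O ∈ ℝ^{ℓ×ℓ} with O u_ℓ = u_ℓ. Then there exist λ, ν ∈ ℝ such that A = λ·(I_ℓ − (1/ℓ)·u_ℓ u_ℓᵀ) + ν·(1/ℓ)·u_ℓ u_ℓᵀ. -/
open Matrix

lemma perm_invar {ℓ : ℕ} (A : Matrix (Fin ℓ) (Fin ℓ) ℝ)
    (hA : ∀ O : Matrix (Fin ℓ) (Fin ℓ) ℝ,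
      Oᵀ * O = 1 → O *ᵥ (1 : Fin ℓ → ℝ) = (1 : Fin ℓ → ℝ) → O * A * Oᵀ = A)
    (σ : Equiv.Perm (Fin ℓ)) (i j : Fin ℓ) : A (σ i) (σ j) = A i j := by
  have hO : (σ.permMatrix ℝ)ᵀ * σ.permMatrix ℝ = 1 := by
    rw [← PEquiv.toMatrix_symm, ← Equiv.toPEquiv_symm, ← PEquiv.toMatrix_trans,
      ← Equiv.toPEquiv_trans]
    simp
  have hu : σ.permMatrix ℝ *ᵥ (1 : Fin ℓ → ℝ) = 1 := by
    ext i
    simp [mulVec, dotProduct, Equiv.Perm.permMatrix, PEquiv.toMatrix,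
      Equiv.toPEquiv_apply]
  have := hA _ hO hu
  rw [← PEquiv.toMatrix_symm, ← Equiv.toPEquiv_symm] at this
  rw [PEquiv.toMatrix_toPEquiv_mul, PEquiv.mul_toMatrix_toPEquiv] at this
  have := congrArg (fun M => M i j) this
  simpa using this

/-- If `A ∈ ℝ^{ℓ×ℓ}` satisfies `O A Oᵀ = A` for every orthogonal
matrix `O` fixing the all-ones vector `uₗ`, then `A` is a combination
`λ (I − uₗuₗᵀ/ℓ) + ν uₗuₗᵀ/ℓ` of the projections onto the hyperplane orthogonal to
`uₗ` and onto the span of `uₗ`. -/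
theorem stmt14 (ℓ : ℕ) (hℓ : 0 < ℓ)
    (A : Matrix (Fin ℓ) (Fin ℓ) ℝ)
    (hA : ∀ O : Matrix (Fin ℓ) (Fin ℓ) ℝ,
      Oᵀ * O = 1 → O *ᵥ (1 : Fin ℓ → ℝ) = (1 : Fin ℓ → ℝ) → O * A * Oᵀ = A) :
    ∃ lam nu : ℝ,
      A = lam • ((1 : Matrix (Fin ℓ) (Fin ℓ) ℝ) -
            (ℓ : ℝ)⁻¹ • vecMulVec (1 : Fin ℓ → ℝ) (1 : Fin ℓ → ℝ)) +
          nu • ((ℓ : ℝ)⁻¹ • vecMulVec (1 : Fin ℓ → ℝ) (1 : Fin ℓ → ℝ)) := by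
  have hperm := perm_invar A hA
  have hℓ0 : (ℓ : ℝ) ≠ 0 := Nat.cast_ne_zero.2 hℓ.ne'
  rcases eq_or_lt_of_le (show 1 ≤ ℓ from hℓ) with h1 | h2
  · -- ℓ = 1
    refine ⟨0, A ⟨0, hℓ⟩ ⟨0, hℓ⟩, ?_⟩
    ext i j
    have hi : i = ⟨0, hℓ⟩ := by omega
    have hj : j = ⟨0, hℓ⟩ := by omega
    subst hi hj
    simp [vecMulVec, ← h1]
  · -- ℓ ≥ 2
    set z0 : Fin ℓ := ⟨0, hℓ⟩ with hz0
    set z1 : Fin ℓ := ⟨1, h2⟩ with hz1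
    have hz01 : z0 ≠ z1 := by simp [hz0, hz1, Fin.ext_iff]
    set a : ℝ := A z0 z0 with ha
    set b : ℝ := A z0 z1 with hb
    have hdiag : ∀ i, A i i = a := by
      intro i
      have := hperm (Equiv.swap z0 i) z0 z0
      simpa [ha] using this
    have hoff : ∀ i j, i ≠ j → A i j = b := by
      intro i j hij
      set s := Equiv.swap z0 i with hs
      set k := s z1 with hk
      have hki : k ≠ i := by
        simpa [hk, hs] using (Equiv.injective s).ne_iff.2 hz01.symm
      have hji : j ≠ i := hij.symm
      set t : Equiv.Perm (Fin ℓ) := if k = j then 1 else Equiv.swap k j with ht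
      have hti : t i = i := by
        rcases eq_or_ne k j with h | h
        · simp [ht, h]
        · simp only [ht, if_neg h]
          exact Equiv.swap_apply_of_ne_of_ne hki.symm hji.symm
      have htk : t k = j := by
        rcases eq_or_ne k j with h | h
        · simp [ht, h]
        · simp [ht, if_neg h]
      have := hperm (s.trans t) z0 z1
      simp only [Equiv.trans_apply] at this
      rw [show s z0 = i by simp [hs], ← hk, hti, htk] at this
      exact this
    refine ⟨a - b, a + (ℓ - 1) * b, ?_⟩
    ext i j
    rcases eq_or_ne i j with h | h
    · subst h
      simp only [Matrix.add_apply, Matrix.smul_apply, Matrix.sub_apply, one_apply_eq, smul_eq_mul,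
        vecMulVec_apply, Pi.one_apply, mul_one, hdiag i]
      field_simp
      ring
    · simp only [Matrix.add_apply, Matrix.smul_apply, Matrix.sub_apply, one_apply_ne h, smul_eq_mul,
        vecMulVec_apply, Pi.one_apply, mul_one, hoff i j h]
      field_simp
      ring
end

section
/- Let s_1, …, s_ℓ ∈ ℝ^ℓ be pure states and p_1, …, p_ℓ ≥ 0 weights with ∑_i p_i = 1 and ∑_i p_i s_i s_iᵀ = (1/ℓ)·I_ℓ. Then p_i = 1/ℓ for every i and s_i·s_j = 0 for all i ≠ j; that is, the only ℓ-element set of pure states supporting a spherical 2-design is a regular simplex, namely an orthonormal basis of ℝ^ℓ lying on the hyperplane u_ℓ·v = 1. -/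
open Matrix

/-- If `ℓ` pure states `s₁, …, s_ℓ` with weights `p₁, …, p_ℓ`
form a spherical 2-design, i.e. `∑ i, pᵢ • sᵢ sᵢᵀ = (1/ℓ) I`, then `pᵢ = 1/ℓ` for
every `i` and the states are pairwise orthogonal: the only `ℓ`-element set of pure
states supporting a spherical 2-design is a regular simplex, namely an orthonormal
basis of `ℝ^ℓ` lying on the hyperplane `uₗ ⬝ v = 1`. -/
theorem stmt17 (ℓ : ℕ) (hℓ : 0 < ℓ)
    (s : Fin ℓ → (Fin ℓ → ℝ)) (p : Fin ℓ → ℝ)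
    (hpure : ∀ i, (1 : Fin ℓ → ℝ) ⬝ᵥ s i = 1 ∧ s i ⬝ᵥ s i = 1)
    (hp : ∀ i, 0 ≤ p i) (hpsum : ∑ i, p i = 1)
    (hdesign : ∑ i, p i • vecMulVec (s i) (s i) = (ℓ : ℝ)⁻¹ • (1 : Matrix (Fin ℓ) (Fin ℓ) ℝ)) :
    (∀ i, p i = (ℓ : ℝ)⁻¹) ∧ ∀ i j, i ≠ j → s i ⬝ᵥ s j = 0 := by
  set A : Matrix (Fin ℓ) (Fin ℓ) ℝ := Matrix.of (fun i j => Real.sqrt (p i) * s i j) with hA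
  have hℓR : (ℓ : ℝ) ≠ 0 := Nat.cast_ne_zero.mpr hℓ.ne'
  have hAtA : Aᵀ * A = (ℓ : ℝ)⁻¹ • (1 : Matrix (Fin ℓ) (Fin ℓ) ℝ) := by
    rw [← hdesign]
    ext k l
    simp only [Matrix.mul_apply, Matrix.transpose_apply, hA, Matrix.of_apply,
      Matrix.sum_apply, Matrix.smul_apply, vecMulVec_apply, smul_eq_mul]
    refine Finset.sum_congr rfl fun i _ => ?_
    rw [show Real.sqrt (p i) * s i k * (Real.sqrt (p i) * s i l)
        = Real.sqrt (p i) * Real.sqrt (p i) * (s i k * s i l) by ring,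
      Real.mul_self_sqrt (hp i)]
  have h1 : ((ℓ : ℝ) • Aᵀ) * A = 1 := by
    simp [Matrix.smul_mul, hAtA, smul_smul, mul_inv_cancel₀ hℓR]
  have h2 : A * ((ℓ : ℝ) • Aᵀ) = 1 := mul_eq_one_comm.mp h1
  have hAAt : A * Aᵀ = (ℓ : ℝ)⁻¹ • (1 : Matrix (Fin ℓ) (Fin ℓ) ℝ) := by
    have h3 : (ℓ : ℝ) • (A * Aᵀ) = 1 := by rw [← Matrix.mul_smul]; exact h2
    rw [← h3, smul_smul, inv_mul_cancel₀ hℓR, one_smul]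
  have key : ∀ i j, Real.sqrt (p i) * Real.sqrt (p j) * (s i ⬝ᵥ s j)
      = (ℓ : ℝ)⁻¹ * (if i = j then 1 else 0) := by
    intro i j
    have h := congrFun (congrFun hAAt i) j
    simp only [Matrix.mul_apply, Matrix.transpose_apply, hA, Matrix.of_apply,
      Matrix.smul_apply, Matrix.one_apply, smul_eq_mul] at h
    rw [← h, dotProduct, Finset.mul_sum]
    exact Finset.sum_congr rfl fun k _ => by ring
  have hdiag : ∀ i, p i = (ℓ : ℝ)⁻¹ := by
    intro i
    have h := key i i
    rw [(hpure i).2, if_pos rfl, mul_one, mul_one, Real.mul_self_sqrt (hp i)] at h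
    exact h
  refine ⟨hdiag, fun i j hij => ?_⟩
  have h := key i j
  rw [if_neg hij, mul_zero] at h
  have hpi : (0:ℝ) < p i := by rw [hdiag i]; positivity
  have hpj : (0:ℝ) < p j := by rw [hdiag j]; positivity
  have hs : 0 < Real.sqrt (p i) * Real.sqrt (p j) :=
    mul_pos (Real.sqrt_pos.mpr hpi) (Real.sqrt_pos.mpr hpj)
  exact (mul_eq_zero.mp h).resolve_left hs.ne'
end
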